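/- Let A ∈ ℝ^{m×p}, B ∈ ℝ^{q×n}, C ∈ ℝ^{m×n}, and let X⋆ ∈ ℝ^{p×q} satisfy A X⋆ B = C. Then for any X ∈ ℝ^{p×q} and any row index i, ⟨A_{i,:}ᵀ (C_{i,:} − A_{i,:} X B) Bᵀ, X − X⋆⟩_F = −‖C_{i,:} − A_{i,:} X B‖². -/
import Mathlib


open Matrix Finset Filter Topology

/-- Squared Euclidean norm of a vector. -/
noncomputable def vnormSq {k : ℕ} (v : Fin k → ℝ) : ℝ := ∑ j, (v j) ^ 2

/-- Squared Frobenius norm of a matrix. -/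
noncomputable def frobSq {a b : ℕ} (X : Matrix (Fin a) (Fin b) ℝ) : ℝ := ∑ i, ∑ j, (X i j) ^ 2

/-- Frobenius norm of a matrix. -/
noncomputable def frobNorm {a b : ℕ} (X : Matrix (Fin a) (Fin b) ℝ) : ℝ := Real.sqrt (frobSq X)

/-- Frobenius (trace) inner product `⟨X, Y⟩_F = tr(Xᵀ Y)`. -/
noncomputable def frobInner {a b : ℕ} (X Y : Matrix (Fin a) (Fin b) ℝ) : ℝ := Matrix.trace (Xᵀ * Y)

/-- Spectral (operator 2-) norm of a matrix. -/
noncomputable def specNorm {a b : ℕ} (B : Matrix (Fin a) (Fin b) ℝ) : ℝ :=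
  ‖LinearMap.toContinuousLinearMap (Matrix.toEuclideanLin B)‖

/-- `Mp` is the Moore–Penrose pseudoinverse of `M`: the four Penrose conditions. -/
def IsMPInv {a b : ℕ} (M : Matrix (Fin a) (Fin b) ℝ) (Mp : Matrix (Fin b) (Fin a) ℝ) : Prop :=
  M * Mp * M = M ∧ Mp * M * Mp = Mp ∧ (M * Mp)ᵀ = M * Mp ∧ (Mp * M)ᵀ = Mp * M

lemma frobInner_vecMulVec {a b : ℕ} (u : Fin a → ℝ) (w : Fin b → ℝ)
    (Y : Matrix (Fin a) (Fin b) ℝ) :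
    frobInner (vecMulVec u w) Y = u ⬝ᵥ (Y *ᵥ w) := by
  simp only [frobInner, Matrix.trace, Matrix.diag, mul_apply, transpose_apply, vecMulVec_apply,
    mulVec, dotProduct, Finset.mul_sum, Finset.sum_mul]
  rw [Finset.sum_comm]
  exact Finset.sum_congr rfl fun l _ => Finset.sum_congr rfl fun k _ => by ring

/-- The key inner-product identity:
`⟨A_{i,:}ᵀ (C_{i,:} − A_{i,:} X B) Bᵀ, X − X⋆⟩_F = −‖C_{i,:} − A_{i,:} X B‖²`. -/
theorem stmt4 {m p q n : ℕ}
    (A : Matrix (Fin m) (Fin p) ℝ) (B : Matrix (Fin q) (Fin n) ℝ) (C : Matrix (Fin m) (Fin n) ℝ)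
    (Xstar : Matrix (Fin p) (Fin q) ℝ) (hsol : A * Xstar * B = C)
    (X : Matrix (Fin p) (Fin q) ℝ) (i : Fin m) :
    frobInner (vecMulVec (A i) (B *ᵥ ((C - A * X * B) i))) (X - Xstar)
      = - vnormSq ((C - A * X * B) i) := by
  set r := (C - A * X * B) i with hr
  have key : A * ((X - Xstar) * B) = -(C - A * X * B) := by
    rw [← Matrix.mul_assoc, Matrix.mul_sub, Matrix.sub_mul, hsol, neg_sub]
  rw [frobInner_vecMulVec, Matrix.mulVec_mulVec]
  have h3 : A i ⬝ᵥ (((X - Xstar) * B) *ᵥ r) = (A *ᵥ (((X - Xstar) * B) *ᵥ r)) i := by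
    simp [Matrix.mulVec, dotProduct]
  rw [h3, Matrix.mulVec_mulVec, key]
  simp only [Matrix.mulVec, dotProduct, vnormSq, hr, Matrix.neg_apply, Matrix.sub_apply]
  rw [← Finset.sum_neg_distrib]
  exact Finset.sum_congr rfl fun x _ => by ring
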